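/- Let 1 ≤ q < ∞ and let ψ : [0,∞) → [0,∞) be an increasing concave function with ψ(0) = 0. For every nonincreasing nonnegative measurable function x on (0,∞), one has (1 − M) · Σ_{k∈ℤ} x(2^k)^q ψ(2^k) ≤ ∫_0^∞ x(t)^q dψ(t) ≤ 2 · Σ_{k∈ℤ} x(2^k)^q ψ(2^k), where M = sup_{s>0} ψ(s/2)/ψ(s) < 1 is assumed. -/

import Mathlib

open MeasureTheory Set

theorem stmt6 (q : ℝ) (hq : 1 ≤ q) (ψ : StieltjesFunction ℝ)
    (hψconc : ConcaveOn ℝ (Set.Ici 0) ψ)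
    (hψmono : MonotoneOn ψ (Set.Ici 0)) (hψ0 : ψ 0 = 0)
    (M : ℝ) (hM : ∀ s : ℝ, 0 < s → ψ (s / 2) ≤ M * ψ s) (hM1 : M < 1)
    (x : ℝ → ℝ) (hxmeas : Measurable x)
    (hxnonneg : ∀ t : ℝ, 0 < t → 0 ≤ x t)
    (hxanti : AntitoneOn x (Set.Ioi 0)) :
    ENNReal.ofReal (1 - M) *
        ∑' k : ℤ, ENNReal.ofReal (x ((2 : ℝ) ^ k) ^ q * ψ ((2 : ℝ) ^ k))
      ≤ ∫⁻ t in Set.Ioi (0 : ℝ), ENNReal.ofReal (x t ^ q) ∂ψ.measure ∧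
    ∫⁻ t in Set.Ioi (0 : ℝ), ENNReal.ofReal (x t ^ q) ∂ψ.measure
      ≤ 2 * ∑' k : ℤ, ENNReal.ofReal (x ((2 : ℝ) ^ k) ^ q * ψ ((2 : ℝ) ^ k)) := by
  set I : ℤ → Set ℝ := fun k => Ioc ((2:ℝ) ^ k) ((2:ℝ) ^ (k + 1)) with hI
  have hpow : ∀ k : ℤ, (0:ℝ) < 2 ^ k := fun k => zpow_pos (by norm_num) k
  have hpowmono : ∀ k l : ℤ, k ≤ l → (2:ℝ) ^ k ≤ 2 ^ l := fun k l h =>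
    zpow_le_zpow_right₀ (by norm_num) h
  have hψnn : ∀ k : ℤ, 0 ≤ ψ ((2:ℝ) ^ k) := by
    intro k
    have := hψmono (le_refl (0:ℝ)) (le_of_lt (hpow k)) (le_of_lt (hpow k))
    linarith [hψ0 ▸ this]
  have hxq_nn : ∀ k : ℤ, 0 ≤ x ((2:ℝ) ^ k) ^ q := fun k =>
    Real.rpow_nonneg (hxnonneg _ (hpow k)) q
  -- concavity: ψ (2 s) ≤ 2 ψ s for s ≥ 0
  have hdouble : ∀ s : ℝ, 0 ≤ s → ψ (2 * s) ≤ 2 * ψ s := by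
    intro s hs
    have h := hψconc.2 (show (0:ℝ) ∈ Ici (0:ℝ) from mem_Ici.2 le_rfl)
      (show 2 * s ∈ Ici (0:ℝ) from mem_Ici.2 (by positivity))
      (by norm_num : (0:ℝ) ≤ (1:ℝ)/2) (by norm_num : (0:ℝ) ≤ (1:ℝ)/2) (by norm_num)
    simp only [smul_eq_mul, hψ0] at h
    have : (1:ℝ)/2 * 0 + 1/2 * (2 * s) = s := by ring
    rw [this] at h
    linarith
  have hstep : ∀ k : ℤ, ψ ((2:ℝ) ^ (k + 1)) ≤ 2 * ψ ((2:ℝ) ^ k) := by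
    intro k
    have h2 : (2:ℝ) ^ (k + 1) = 2 * 2 ^ k := by
      rw [zpow_add_one₀ (by norm_num : (2:ℝ) ≠ 0)]; ring
    rw [h2]
    exact hdouble _ (le_of_lt (hpow k))
  have hMstep : ∀ k : ℤ, ψ ((2:ℝ) ^ k) ≤ M * ψ ((2:ℝ) ^ (k + 1)) := by
    intro k
    have h2 : (2:ℝ) ^ (k + 1) / 2 = 2 ^ k := by
      rw [zpow_add_one₀ (by norm_num : (2:ℝ) ≠ 0)]; ring
    have := hM ((2:ℝ) ^ (k + 1)) (hpow (k + 1))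
    rwa [h2] at this
  have hImeas : ∀ k : ℤ, MeasurableSet (I k) := fun k => measurableSet_Ioc
  have hIdisj : Pairwise (Function.onFun Disjoint I) := by
    intro k l hkl
    rcases lt_or_gt_of_ne hkl with h | h
    · exact Set.Ioc_disjoint_Ioc.2 (le_trans (min_le_left _ _)
        (le_trans (hpowmono _ _ (by omega)) (le_max_right _ _)))
    · exact Set.Ioc_disjoint_Ioc.2 (le_trans (min_le_right _ _)
        (le_trans (hpowmono _ _ (by omega)) (le_max_left _ _)))
  have hIunion : ⋃ k : ℤ, I k = Ioi (0:ℝ) := by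
    ext t
    simp only [mem_iUnion, hI, mem_Ioc, mem_Ioi]
    constructor
    · rintro ⟨k, h1, _⟩
      exact lt_trans (hpow k) h1
    · intro ht
      exact exists_mem_Ioc_zpow ht (by norm_num : (1:ℝ) < 2)
  have hsplit : ∫⁻ t in Set.Ioi (0:ℝ), ENNReal.ofReal (x t ^ q) ∂ψ.measure
      = ∑' k : ℤ, ∫⁻ t in I k, ENNReal.ofReal (x t ^ q) ∂ψ.measure := by
    rw [← hIunion, lintegral_iUnion hImeas hIdisj]
  have hmeasIoc : ∀ k : ℤ, ψ.measure (I k)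
      = ENNReal.ofReal (ψ ((2:ℝ) ^ (k + 1)) - ψ ((2:ℝ) ^ k)) := fun k =>
    ψ.measure_Ioc _ _
  constructor
  · -- lower bound
    rw [hsplit]
    have key : ∀ k : ℤ,
        ENNReal.ofReal (1 - M) * ENNReal.ofReal (x ((2:ℝ) ^ (k + 1)) ^ q * ψ ((2:ℝ) ^ (k + 1)))
          ≤ ∫⁻ t in I k, ENNReal.ofReal (x t ^ q) ∂ψ.measure := by
      intro k
      have hlow : ∀ t ∈ I k, ENNReal.ofReal (x ((2:ℝ) ^ (k + 1)) ^ q) ≤ ENNReal.ofReal (x t ^ q) := by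
        intro t ht
        obtain ⟨ht1, ht2⟩ := ht
        have htpos : (0:ℝ) < t := lt_trans (hpow k) ht1
        have hxle : x ((2:ℝ) ^ (k + 1)) ≤ x t :=
          hxanti (mem_Ioi.2 htpos) (mem_Ioi.2 (hpow (k + 1))) ht2
        exact ENNReal.ofReal_le_ofReal
          (Real.rpow_le_rpow (hxnonneg _ (hpow (k+1))) hxle (le_trans zero_le_one hq))
      calc ENNReal.ofReal (1 - M) * ENNReal.ofReal (x ((2:ℝ) ^ (k + 1)) ^ q * ψ ((2:ℝ) ^ (k + 1)))
          = ENNReal.ofReal (x ((2:ℝ) ^ (k + 1)) ^ q)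
            * ENNReal.ofReal ((1 - M) * ψ ((2:ℝ) ^ (k + 1))) := by
            rw [ENNReal.ofReal_mul (hxq_nn (k + 1)),
              ENNReal.ofReal_mul (by linarith : (0:ℝ) ≤ 1 - M)]
            ring
        _ ≤ ENNReal.ofReal (x ((2:ℝ) ^ (k + 1)) ^ q)
            * ENNReal.ofReal (ψ ((2:ℝ) ^ (k + 1)) - ψ ((2:ℝ) ^ k)) := by
            gcongr
            have := hMstep k
            linarith
        _ = ENNReal.ofReal (x ((2:ℝ) ^ (k + 1)) ^ q) * ψ.measure (I k) := by
            rw [hmeasIoc k]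
        _ = ∫⁻ _ in I k, ENNReal.ofReal (x ((2:ℝ) ^ (k + 1)) ^ q) ∂ψ.measure := by
            rw [setLIntegral_const]
        _ ≤ ∫⁻ t in I k, ENNReal.ofReal (x t ^ q) ∂ψ.measure :=
            setLIntegral_mono' (hImeas k) hlow
    calc ENNReal.ofReal (1 - M) * ∑' k : ℤ, ENNReal.ofReal (x ((2:ℝ) ^ k) ^ q * ψ ((2:ℝ) ^ k))
        = ∑' k : ℤ, ENNReal.ofReal (1 - M) * ENNReal.ofReal (x ((2:ℝ) ^ k) ^ q * ψ ((2:ℝ) ^ k)) :=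
          (ENNReal.tsum_mul_left).symm
      _ = ∑' k : ℤ, ENNReal.ofReal (1 - M)
            * ENNReal.ofReal (x ((2:ℝ) ^ (k + 1)) ^ q * ψ ((2:ℝ) ^ (k + 1))) := by
          exact ((Equiv.addRight (1:ℤ)).tsum_eq fun k =>
            ENNReal.ofReal (1 - M) * ENNReal.ofReal (x ((2:ℝ) ^ k) ^ q * ψ ((2:ℝ) ^ k))).symm
      _ ≤ ∑' k : ℤ, ∫⁻ t in I k, ENNReal.ofReal (x t ^ q) ∂ψ.measure :=
          ENNReal.tsum_le_tsum key
  · -- upper bound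
    rw [hsplit]
    have key : ∀ k : ℤ, ∫⁻ t in I k, ENNReal.ofReal (x t ^ q) ∂ψ.measure
        ≤ 2 * ENNReal.ofReal (x ((2:ℝ) ^ k) ^ q * ψ ((2:ℝ) ^ k)) := by
      intro k
      have hup : ∀ t ∈ I k, ENNReal.ofReal (x t ^ q) ≤ ENNReal.ofReal (x ((2:ℝ) ^ k) ^ q) := by
        intro t ht
        obtain ⟨ht1, _⟩ := ht
        have htpos : (0:ℝ) < t := lt_trans (hpow k) ht1
        have hxle : x t ≤ x ((2:ℝ) ^ k) :=
          hxanti (mem_Ioi.2 (hpow k)) (mem_Ioi.2 htpos) (le_of_lt ht1)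
        exact ENNReal.ofReal_le_ofReal
          (Real.rpow_le_rpow (hxnonneg t htpos) hxle (le_trans zero_le_one hq))
      calc ∫⁻ t in I k, ENNReal.ofReal (x t ^ q) ∂ψ.measure
          ≤ ∫⁻ _ in I k, ENNReal.ofReal (x ((2:ℝ) ^ k) ^ q) ∂ψ.measure :=
            setLIntegral_mono' (hImeas k) hup
        _ = ENNReal.ofReal (x ((2:ℝ) ^ k) ^ q) * ψ.measure (I k) := setLIntegral_const _ _
        _ = ENNReal.ofReal (x ((2:ℝ) ^ k) ^ q)
            * ENNReal.ofReal (ψ ((2:ℝ) ^ (k + 1)) - ψ ((2:ℝ) ^ k)) := by rw [hmeasIoc k]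
        _ ≤ ENNReal.ofReal (x ((2:ℝ) ^ k) ^ q) * ENNReal.ofReal (2 * ψ ((2:ℝ) ^ k)) := by
            gcongr
            have := hstep k
            have := hψnn k
            linarith
        _ = 2 * ENNReal.ofReal (x ((2:ℝ) ^ k) ^ q * ψ ((2:ℝ) ^ k)) := by
            rw [ENNReal.ofReal_mul (by norm_num : (0:ℝ) ≤ 2),
              ENNReal.ofReal_mul (hxq_nn k), ENNReal.ofReal_ofNat]
            ring
    calc ∑' k : ℤ, ∫⁻ t in I k, ENNReal.ofReal (x t ^ q) ∂ψ.measure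
        ≤ ∑' k : ℤ, 2 * ENNReal.ofReal (x ((2:ℝ) ^ k) ^ q * ψ ((2:ℝ) ^ k)) :=
          ENNReal.tsum_le_tsum key
      _ = 2 * ∑' k : ℤ, ENNReal.ofReal (x ((2:ℝ) ^ k) ^ q * ψ ((2:ℝ) ^ k)) :=
          ENNReal.tsum_mul_left
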